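/- arXiv:1910.00551 — 3 statements merged into one kernel-verified Lean document; each statement's English description precedes it below -/
import Mathlib

section
/- Let U : ℝ^d → ℝ be an almost everywhere differentiable function with exp(−U) integrable, satisfying the dissipativity condition ⟨x, ∇U(x)⟩ ≥ a‖x‖² − b for all x ∈ ℝ^d, where a > 0 and b ≥ 0. Then there is a universal constant C > 0 such that for all δ ∈ (0,1), the probability measure π with density proportional to exp(−U) satisfies P_π(‖X‖ ≥ C·√((b + d + log(1/δ))/a)) ≤ δ. -/
open MeasureTheory Real
open scoped ENNReal RealInnerProductSpace

noncomputable section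

/-- Euclidean space ℝ^d. -/
abbrev Euc (d : ℕ) := EuclideanSpace ℝ (Fin d)

/-- Total variation distance between two measures: the supremum over Borel sets `A`
of `|P A - Q A|`. -/
def tvDist {X : Type*} [MeasurableSpace X] (P Q : Measure X) : ℝ :=
  ⨆ A : {s : Set X // MeasurableSet s}, |(P A.1).toReal - (Q A.1).toReal|

/-- The smoothed partition function `Z(u) = ∫ exp(−‖y−u‖²/(4η) − g(y)) dy`. -/
def Zfun (d : ℕ) (η : ℝ) (g : Euc d → ℝ) (u : Euc d) : ℝ :=
  ∫ y, Real.exp (-‖y - u‖ ^ 2 / (4 * η) - g y)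

/-- The proposal density
`p(x,y) = Z(x−η∇f(x))⁻¹ · exp(−‖y−(x−η∇f(x))‖²/(4η) − g(y))`. -/
def propDensity (d : ℕ) (η : ℝ) (f g : Euc d → ℝ) (x y : Euc d) : ℝ :=
  (Zfun d η g (x - η • gradient f x))⁻¹ *
    Real.exp (-‖y - (x - η • gradient f x)‖ ^ 2 / (4 * η) - g y)

/-- The proposal distribution `P_x`, with density `p(x,·)`. -/
def propMeasure (d : ℕ) (η : ℝ) (f g : Euc d → ℝ) (x : Euc d) : Measure (Euc d) :=
  volume.withDensity fun y => ENNReal.ofReal (propDensity d η f g x y)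

/-- The Metropolis–Hastings acceptance probability
`α(x,y) = min(1, e^{−U(y)} p(y,x) / (e^{−U(x)} p(x,y)))`, with `U = f + g`. -/
def accept (d : ℕ) (η : ℝ) (f g : Euc d → ℝ) (x y : Euc d) : ℝ :=
  min 1 (Real.exp (-(f y + g y)) * propDensity d η f g y x /
    (Real.exp (-(f x + g x)) * propDensity d η f g x y))

/-- The Metropolis transition kernel
`T_x(A) = ∫_A p(x,y) α(x,y) dy + δ_x(A) ∫ (1−α(x,y)) p(x,y) dy`. -/
def transKernel (d : ℕ) (η : ℝ) (f g : Euc d → ℝ) (x : Euc d) : Measure (Euc d) :=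
  (volume.withDensity fun y =>
      ENNReal.ofReal (propDensity d η f g x y * accept d η f g x y)) +
  ENNReal.ofReal (∫ y, (1 - accept d η f g x y) * propDensity d η f g x y) • Measure.dirac x

/-- The rejection probability `p^rej_x = ∫ (1−α(x,y)) p(x,y) dy`. -/
def rejProb (d : ℕ) (η : ℝ) (f g : Euc d → ℝ) (x : Euc d) : ℝ :=
  ∫ y, (1 - accept d η f g x y) * propDensity d η f g x y

/-- Unnormalized density `min(p(x,y), e^{U(x)−U(y)} p(y,x))` of the successful-transition
kernel, with `U = f + g`. -/
def succDensity (d : ℕ) (η : ℝ) (f g : Euc d → ℝ) (x y : Euc d) : ℝ :=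
  min (propDensity d η f g x y)
    (Real.exp ((f x + g x) - (f y + g y)) * propDensity d η f g y x)

/-- The successful-transition kernel `T^succ_x`, with density proportional to
`min(p(x,y), e^{U(x)−U(y)} p(y,x))`. -/
def succKernel (d : ℕ) (η : ℝ) (f g : Euc d → ℝ) (x : Euc d) : Measure (Euc d) :=
  volume.withDensity fun y =>
    ENNReal.ofReal ((∫ z, succDensity d η f g x z)⁻¹ * succDensity d η f g x y)

/-- The target measure `Π` with density proportional to `exp(−(f+g))`. -/
def targetMeasure (d : ℕ) (f g : Euc d → ℝ) : Measure (Euc d) :=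
  volume.withDensity fun x =>
    ENNReal.ofReal ((∫ z, Real.exp (-(f z + g z)))⁻¹ * Real.exp (-(f x + g x)))

/-- The proximal sampling distribution `O_{η,g}(y)`, with density proportional to
`exp(−‖q−y‖²/(4η) − g(q))`. -/
def proxMeasure (d : ℕ) (η : ℝ) (g : Euc d → ℝ) (y : Euc d) : Measure (Euc d) :=
  volume.withDensity fun q =>
    ENNReal.ofReal ((Zfun d η g y)⁻¹ * Real.exp (-‖q - y‖ ^ 2 / (4 * η) - g q))

/-- At a point of non-differentiability, the gradient is `0`. -/
lemma gradient_of_not_diff {d : ℕ} {U : Euc d → ℝ} {x : Euc d}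
    (h : ¬ DifferentiableAt ℝ U x) : gradient U x = 0 := by
  simp [gradient, fderiv_zero_of_not_differentiableAt h]

/-- Key ray bound: under dissipativity (everywhere), outside the ball `{a‖x‖² ≤ b}` the
function `U` is differentiable along rays and `U (3 y) ≥ U y + 4 a ‖y‖² - b log 3`. -/
lemma ray_bound {d : ℕ} {U : Euc d → ℝ} {a b : ℝ} (ha : 0 < a)
    (hdis : ∀ x : Euc d, ⟪x, gradient U x⟫ ≥ a * ‖x‖ ^ 2 - b)
    {y : Euc d} (hy : b < a * ‖y‖ ^ 2) :
    U y + 4 * a * ‖y‖ ^ 2 - b * Real.log 3 ≤ U ((3:ℝ) • y) := by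
  have hnorm : ∀ t : ℝ, 0 < t → ‖t • y‖ ^ 2 = t ^ 2 * ‖y‖ ^ 2 := by
    intro t ht
    rw [norm_smul, Real.norm_eq_abs, mul_pow, sq_abs]
  have hkey : ∀ t ∈ Set.Icc (1:ℝ) 3, b < a * ‖t • y‖ ^ 2 := by
    intro t ht
    rw [hnorm t (by linarith [ht.1])]
    have ht2 : (1:ℝ) ≤ t ^ 2 := by nlinarith [ht.1]
    have hnn : 0 ≤ a * ‖y‖ ^ 2 * (t ^ 2 - 1) :=
      mul_nonneg (mul_nonneg ha.le (sq_nonneg ‖y‖)) (sub_nonneg.mpr ht2)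
    nlinarith [hy, hnn]
  have hdiff : ∀ t ∈ Set.Icc (1:ℝ) 3, DifferentiableAt ℝ U (t • y) := by
    intro t ht
    by_contra h
    have h0 := hdis (t • y)
    rw [gradient_of_not_diff h, inner_zero_right] at h0
    linarith [hkey t ht]
  have hg : ∀ t ∈ Set.Icc (1:ℝ) 3,
      HasDerivAt (fun s : ℝ => U (s • y)) ⟪gradient U (t • y), y⟫ t := by
    intro t ht
    have h1 := (hdiff t ht).hasGradientAt.hasFDerivAt
    have h2 : HasDerivAt (fun s : ℝ => s • y) y t := by
      simpa using (hasDerivAt_id t).smul_const y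
    have h3 := h1.comp_hasDerivAt t h2
    simpa [InnerProductSpace.toDual_apply_apply, Function.comp_def] using h3
  set c := a * ‖y‖ ^ 2 / 2 with hc
  set F := fun s : ℝ => U (s • y) - c * s ^ 2 + b * Real.log s with hFdef
  have hF : ∀ t ∈ Set.Icc (1:ℝ) 3,
      HasDerivAt F (⟪gradient U (t • y), y⟫ - c * (2 * t) + b * t⁻¹) t := by
    intro t ht
    have ht0 : t ≠ 0 := by intro h; rw [h] at ht; exact absurd ht.1 (by norm_num)
    have h2 : HasDerivAt (fun s : ℝ => c * s ^ 2) (c * (2 * t)) t := by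
      simpa using (hasDerivAt_pow 2 t).const_mul c
    have h3 : HasDerivAt (fun s : ℝ => b * Real.log s) (b * t⁻¹) t :=
      (Real.hasDerivAt_log ht0).const_mul b
    exact ((hg t ht).sub h2).add h3
  have hmono : MonotoneOn F (Set.Icc 1 3) := by
    apply monotoneOn_of_deriv_nonneg (convex_Icc 1 3)
    · intro t ht
      exact ((hF t ht).differentiableAt.continuousAt).continuousWithinAt
    · intro t ht
      rw [interior_Icc] at ht
      exact (hF t (Set.mem_Icc_of_Ioo ht)).differentiableAt.differentiableWithinAt
    · intro t ht
      rw [interior_Icc] at ht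
      have ht' := Set.mem_Icc_of_Ioo ht
      rw [(hF t ht').deriv]
      have hpos : (0:ℝ) < t := by linarith [ht'.1]
      have hd := hdis (t • y)
      have hip : ⟪(t:ℝ) • y, gradient U (t • y)⟫ = t * ⟪gradient U (t • y), y⟫ := by
        rw [real_inner_smul_left, real_inner_comm]
      rw [hnorm t hpos, hip] at hd
      have hmul : 0 ≤ t * (⟪gradient U (t • y), y⟫ - c * (2 * t) + b * t⁻¹) := by
        have hbt : t * (b * t⁻¹) = b := by field_simp
        nlinarith [hd]
      nlinarith [hmul, hpos]
  have h13 := hmono (Set.left_mem_Icc.mpr (by norm_num)) (Set.right_mem_Icc.mpr (by norm_num))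
    (by norm_num)
  simp only [hFdef, one_smul, Real.log_one, one_pow, mul_zero, add_zero, mul_one] at h13
  nlinarith [h13]

/-- tail bound under dissipativity. If `U` is almost everywhere
differentiable with `⟨x, ∇U(x)⟩ ≥ a‖x‖² − b`, then for the measure `π ∝ exp(−U)`,
`P_π(‖X‖ ≥ C√((b + d + log(1/δ))/a)) ≤ δ`. -/
theorem dissipative_tail_bound :
    ∃ C > (0:ℝ),
      ∀ (d : ℕ) (U : Euc d → ℝ) (a b : ℝ),
        1 ≤ d → 0 < a → 0 ≤ b →
        (∀ᵐ x ∂(volume : Measure (Euc d)), DifferentiableAt ℝ U x) →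
        (∀ x : Euc d, ⟪x, gradient U x⟫ ≥ a * ‖x‖ ^ 2 - b) →
        Integrable (fun x : Euc d => Real.exp (-U x)) →
        ∀ δ ∈ Set.Ioo (0:ℝ) 1,
          (volume.withDensity fun x : Euc d =>
              ENNReal.ofReal ((∫ z, Real.exp (-U z))⁻¹ * Real.exp (-U x)))
            {x : Euc d | C * Real.sqrt ((b + d + Real.log (1 / δ)) / a) ≤ ‖x‖} ≤
            ENNReal.ofReal δ := by
  refine ⟨3, by norm_num, ?_⟩
  intro d U a b hd ha hb _hdiffae hdis hint δ hδ
  set L := Real.log (1 / δ) with hL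
  have hL0 : 0 < L := Real.log_pos (one_lt_one_div hδ.1 hδ.2)
  set m := b + (d:ℝ) + L with hm
  have hd1 : (1:ℝ) ≤ d := Nat.one_le_cast.mpr hd
  have hm1 : 1 < m := by linarith
  have hma : 0 < m / a := div_pos (by linarith) ha
  set s₀ := Real.sqrt (m / a) with hs
  have hs2 : a * s₀ ^ 2 = m := by
    rw [hs, Real.sq_sqrt hma.le]; field_simp
  set Z := ∫ z, Real.exp (-U z) with hZdef
  have hZ : 0 < Z := by
    rw [hZdef]
    rw [integral_pos_iff_support_of_nonneg (fun x => (Real.exp_pos _).le) hint]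
    have hsup : (Function.support fun x : Euc d => Real.exp (-U x)) = Set.univ := by
      ext x; simp [Function.mem_support, Real.exp_ne_zero]
    rw [hsup]
    exact isOpen_univ.measure_pos volume ⟨0, trivial⟩
  set A := {x : Euc d | 3 * Real.sqrt ((b + d + Real.log (1 / δ)) / a) ≤ ‖x‖} with hAdef
  have hA : MeasurableSet A := (isClosed_le continuous_const continuous_norm).measurableSet
  -- pointwise bound on A
  have hpw : ∀ x ∈ A, Real.exp (-U x) ≤
      Real.exp (b * Real.log 3 - 4 * m) * Real.exp (-U ((3:ℝ)⁻¹ • x)) := by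
    intro x hx
    set y := (3:ℝ)⁻¹ • x with hy
    have h3y : (3:ℝ) • y = x := by rw [hy, smul_smul]; norm_num
    have hynorm : s₀ ≤ ‖y‖ := by
      have hny : ‖y‖ = 3⁻¹ * ‖x‖ := by
        rw [hy, norm_smul, Real.norm_eq_abs]; norm_num
      have hx' : 3 * s₀ ≤ ‖x‖ := hx
      rw [hny]; linarith
    have hmy : m ≤ a * ‖y‖ ^ 2 := by
      calc m = a * s₀ ^ 2 := hs2.symm
        _ ≤ a * ‖y‖ ^ 2 := by
            apply mul_le_mul_of_nonneg_left _ ha.le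
            exact pow_le_pow_left₀ (Real.sqrt_nonneg _) hynorm 2
    have hby : b < a * ‖y‖ ^ 2 := by linarith
    have hray := ray_bound ha hdis hby
    rw [← h3y, ← Real.exp_add]
    apply Real.exp_le_exp.mpr
    linarith [hray]
  have hint3 : Integrable (fun x : Euc d => Real.exp (-U ((3:ℝ)⁻¹ • x))) :=
    (integrable_comp_smul_iff volume (fun z : Euc d => Real.exp (-U z))
      (by norm_num : (3:ℝ)⁻¹ ≠ 0)).mpr hint
  have h3d : ∫ x : Euc d, Real.exp (-U ((3:ℝ)⁻¹ • x)) = (3:ℝ) ^ d * Z := by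
    have heq := Measure.integral_comp_inv_smul_of_nonneg (volume : Measure (Euc d))
      (fun z : Euc d => Real.exp (-U z)) (by norm_num : (0:ℝ) ≤ 3)
    rw [heq, finrank_euclideanSpace_fin, smul_eq_mul, hZdef]
  have htail : ∫ x in A, Real.exp (-U x) ≤ Real.exp (b * Real.log 3 - 4 * m) * 3 ^ d * Z := by
    have h1 : ∫ x in A, Real.exp (-U x) ≤
        ∫ x in A, Real.exp (b * Real.log 3 - 4 * m) * Real.exp (-U ((3:ℝ)⁻¹ • x)) :=
      setIntegral_mono_on hint.integrableOn ((hint3.const_mul _).integrableOn) hA hpw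
    have h2 : ∫ x in A, Real.exp (b * Real.log 3 - 4 * m) * Real.exp (-U ((3:ℝ)⁻¹ • x)) ≤
        ∫ x : Euc d, Real.exp (b * Real.log 3 - 4 * m) * Real.exp (-U ((3:ℝ)⁻¹ • x)) :=
      setIntegral_le_integral (hint3.const_mul _)
        (Filter.Eventually.of_forall fun x => by positivity)
    have h3 : ∫ x : Euc d, Real.exp (b * Real.log 3 - 4 * m) * Real.exp (-U ((3:ℝ)⁻¹ • x)) =
        Real.exp (b * Real.log 3 - 4 * m) * 3 ^ d * Z := by
      rw [integral_const_mul, h3d, mul_assoc]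
    linarith [h1, h2, h3.le, h3.ge]
  have hmeas : (volume.withDensity fun x : Euc d =>
      ENNReal.ofReal (Z⁻¹ * Real.exp (-U x))) A =
      ENNReal.ofReal (Z⁻¹ * ∫ x in A, Real.exp (-U x)) := by
    rw [withDensity_apply _ hA,
      ← ofReal_integral_eq_lintegral_ofReal ((hint.restrict).const_mul Z⁻¹)
        (Filter.Eventually.of_forall fun x => by positivity),
      integral_const_mul]
  rw [hmeas]
  apply ENNReal.ofReal_le_ofReal
  have h1 : Z⁻¹ * ∫ x in A, Real.exp (-U x) ≤
      Z⁻¹ * (Real.exp (b * Real.log 3 - 4 * m) * 3 ^ d * Z) :=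
    mul_le_mul_of_nonneg_left htail (inv_nonneg.mpr hZ.le)
  have h2 : Z⁻¹ * (Real.exp (b * Real.log 3 - 4 * m) * 3 ^ d * Z) =
      Real.exp (b * Real.log 3 - 4 * m) * 3 ^ d := by
    field_simp
  have h3 : Real.exp (b * Real.log 3 - 4 * m) * (3:ℝ) ^ d ≤ δ := by
    have hpow : (3:ℝ) ^ d = Real.exp (d * Real.log 3) := by
      rw [← Real.log_pow, Real.exp_log (by positivity)]
    rw [hpow, ← Real.exp_add, show δ = Real.exp (Real.log δ) from (Real.exp_log hδ.1).symm]
    apply Real.exp_le_exp.mpr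
    have hlog3 : Real.log 3 ≤ 2 := by
      linarith [Real.log_le_sub_one_of_pos (by norm_num : (0:ℝ) < 3)]
    have hlog3' : (0:ℝ) ≤ Real.log 3 := Real.log_nonneg (by norm_num)
    have hlogδ : Real.log δ = -L := by rw [hL, one_div, Real.log_inv]; ring
    rw [hlogδ, hm]
    nlinarith [mul_le_mul_of_nonneg_left hlog3 hb,
      mul_le_mul_of_nonneg_left hlog3 (le_trans zero_le_one hd1)]
  linarith [h1, h2.le, h2.ge, h3]
end
end

section
/- Suppose g : ℝ^d → ℝ is M-Lipschitz and η > 0 is such that Z(u) = ∫ exp(−‖q−u‖²/(4η) − g(q)) dq is finite for all u. Then the function G(y) = −log Z(y) is M-Lipschitz: |G(y₁) − G(y₂)| ≤ M·‖y₁ − y₂‖ for all y₁, y₂ ∈ ℝ^d. -/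
open MeasureTheory Real
open scoped ENNReal RealInnerProductSpace

noncomputable section

lemma Zfun_pos (d : ℕ) (η : ℝ) (g : Euc d → ℝ) (u : Euc d)
    (hZ : Integrable (fun q : Euc d => Real.exp (-‖q - u‖ ^ 2 / (4 * η) - g q))) :
    0 < Zfun d η g u := by
  rw [Zfun, integral_pos_iff_support_of_nonneg (fun q => (Real.exp_pos _).le) hZ]
  have hsupp : Function.support
      (fun q : Euc d => Real.exp (-‖q - u‖ ^ 2 / (4 * η) - g q)) = Set.univ :=
    Set.eq_univ_of_forall fun q => (Real.exp_pos _).ne'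
  rw [hsupp]
  exact isOpen_univ.measure_pos _ Set.univ_nonempty

lemma Zfun_le (d : ℕ) (η M : ℝ) (g : Euc d → ℝ)
    (hg : ∀ x y : Euc d, |g x - g y| ≤ M * ‖x - y‖)
    (hZ : ∀ u : Euc d, Integrable (fun q : Euc d => Real.exp (-‖q - u‖ ^ 2 / (4 * η) - g q)))
    (y₁ y₂ : Euc d) :
    Zfun d η g y₂ ≤ Real.exp (M * ‖y₁ - y₂‖) * Zfun d η g y₁ := by
  have hkey : ∀ q : Euc d, q + (y₂ - y₁) - y₂ = q - y₁ := fun q => by abel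
  have hshift : Zfun d η g y₂ =
      ∫ q : Euc d, Real.exp (-‖q - y₁‖ ^ 2 / (4 * η) - g (q + (y₂ - y₁))) := by
    rw [Zfun, ← MeasureTheory.integral_add_right_eq_self
      (fun q : Euc d => Real.exp (-‖q - y₂‖ ^ 2 / (4 * η) - g q)) (y₂ - y₁)]
    congr 1
    funext q
    rw [hkey q]
  have hint1 : Integrable
      (fun q : Euc d => Real.exp (-‖q - y₁‖ ^ 2 / (4 * η) - g (q + (y₂ - y₁)))) := by
    have := (hZ y₂).comp_add_right (y₂ - y₁)
    refine this.congr (Filter.Eventually.of_forall fun q => ?_)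
    simp only [hkey q]
  have hint2 : Integrable (fun q : Euc d =>
      Real.exp (M * ‖y₁ - y₂‖) * Real.exp (-‖q - y₁‖ ^ 2 / (4 * η) - g q)) :=
    (hZ y₁).const_mul _
  rw [hshift, Zfun, ← MeasureTheory.integral_const_mul]
  refine integral_mono hint1 hint2 fun q => ?_
  rw [← Real.exp_add]
  apply Real.exp_le_exp.mpr
  have h := hg q (q + (y₂ - y₁))
  have hn : ‖q - (q + (y₂ - y₁))‖ = ‖y₁ - y₂‖ := by
    have : q - (q + (y₂ - y₁)) = y₁ - y₂ := by abel
    rw [this]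
  rw [hn] at h
  have := (abs_le.mp h).2
  linarith

/-- if `g` is `M`-Lipschitz and the smoothed partition function
`Z(u) = ∫ exp(−‖q−u‖²/(4η) − g(q)) dq` is finite everywhere, then `G = −log Z`
is `M`-Lipschitz. -/
theorem G_lipschitz (d : ℕ) (η M : ℝ) (g : Euc d → ℝ)
    (hd : 1 ≤ d) (hη : 0 < η)
    (hg : ∀ x y : Euc d, |g x - g y| ≤ M * ‖x - y‖)
    (hZ : ∀ u : Euc d, Integrable (fun q : Euc d => Real.exp (-‖q - u‖ ^ 2 / (4 * η) - g q))) :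
    ∀ y₁ y₂ : Euc d,
      |(-Real.log (Zfun d η g y₁)) - (-Real.log (Zfun d η g y₂))| ≤ M * ‖y₁ - y₂‖ := by
  intro y₁ y₂
  have hp1 := Zfun_pos d η g y₁ (hZ y₁)
  have hp2 := Zfun_pos d η g y₂ (hZ y₂)
  have hrev : ‖y₂ - y₁‖ = ‖y₁ - y₂‖ := norm_sub_rev _ _
  have h12 : Real.log (Zfun d η g y₂) - Real.log (Zfun d η g y₁) ≤ M * ‖y₁ - y₂‖ := by
    have h := Real.log_le_log hp2 (Zfun_le d η M g hg hZ y₁ y₂)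
    rw [Real.log_mul (Real.exp_ne_zero _) hp1.ne', Real.log_exp] at h
    linarith
  have h21 : Real.log (Zfun d η g y₁) - Real.log (Zfun d η g y₂) ≤ M * ‖y₁ - y₂‖ := by
    have h := Real.log_le_log hp1 (Zfun_le d η M g hg hZ y₂ y₁)
    rw [Real.log_mul (Real.exp_ne_zero _) hp2.ne', Real.log_exp, hrev] at h
    linarith
  rw [abs_sub_le_iff]
  constructor <;> linarith
end
end

section
/- Suppose g : ℝ^d → ℝ is convex and η > 0 is such that Z(u) = ∫ exp(−‖q−u‖²/(4η) − g(q)) dq is finite for all u. Then Z is log-concave; equivalently, the function G(y) = −log Z(y) is convex on ℝ^d. -/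
open MeasureTheory Real
open scoped ENNReal RealInnerProductSpace

noncomputable section

section PLAux
open Set
open scoped NNReal

lemma vol_translate (K : Set ℝ) (l : ℝ) : volume ((fun x => x + l) '' K) = volume K := by
  have h : (fun x => x + l) '' K = (fun x => x + (-l)) ⁻¹' K := by
    ext x
    constructor
    · rintro ⟨y, hy, rfl⟩; simpa using hy
    · intro h; exact ⟨x + (-l), h, by ring⟩
  rw [h, measure_preimage_add_right]

lemma compact_sum_vol {K L C : Set ℝ} (hK : IsCompact K) (hL : IsCompact L)
    (hKne : K.Nonempty) (hLne : L.Nonempty)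
    (hsub : ∀ x ∈ K, ∀ y ∈ L, x + y ∈ C) :
    volume K + volume L ≤ volume C := by
  set k := sSup K with hk
  set l := sInf L with hl
  have hkK : k ∈ K := hK.sSup_mem hKne
  have hlL : l ∈ L := hL.sInf_mem hLne
  set U : Set ℝ := (fun x => x + l) '' K with hU
  set V : Set ℝ := (fun y => y + k) '' L with hV
  have hUC : U ⊆ C := by rintro _ ⟨x, hx, rfl⟩; exact hsub x hx l hlL
  have hVC : V ⊆ C := by rintro _ ⟨y, hy, rfl⟩; simpa [add_comm] using hsub k hkK y hy
  have hVm : MeasurableSet V := ((hL.image (continuous_add_right k))).measurableSet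
  have hdisj : Disjoint (U \ {k + l}) V := by
    rw [Set.disjoint_left]
    rintro p ⟨⟨x, hx, rfl⟩, hne⟩ ⟨y, hy, hyy⟩
    simp only at hyy
    have h1 : x ≤ k := le_csSup hK.bddAbove hx
    have h2 : l ≤ y := csInf_le hL.bddBelow hy
    have : x + l = k + l := le_antisymm (by linarith) (by linarith)
    exact hne (by simpa using this)
  calc volume K + volume L = volume U + volume V := by rw [vol_translate, vol_translate]
    _ = volume (U \ {k + l}) + volume V := by rw [measure_diff_null (measure_singleton _)]
    _ = volume ((U \ {k + l}) ∪ V) := (measure_union hdisj hVm).symm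
    _ ≤ volume C := measure_mono (Set.union_subset (fun x hx => hUC hx.1) hVC)

lemma sum_vol_finite {A B C : Set ℝ} (hA : MeasurableSet A) (hB : MeasurableSet B)
    (hAne : A.Nonempty) (hBne : B.Nonempty)
    (hAfin : volume A ≠ ∞) (hBfin : volume B ≠ ∞)
    (hsub : ∀ x ∈ A, ∀ y ∈ B, x + y ∈ C) :
    volume A + volume B ≤ volume C := by
  apply ENNReal.le_of_forall_pos_le_add
  intro ε hε _
  have hε2 : (ε : ℝ≥0∞) / 2 ≠ 0 := by
    simp [ENNReal.div_eq_zero_iff, hε.ne']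
  obtain ⟨K, hKA, hKc, hKv⟩ := hA.exists_isCompact_lt_add hAfin hε2
  obtain ⟨L, hLB, hLc, hLv⟩ := hB.exists_isCompact_lt_add hBfin hε2
  obtain ⟨a, ha⟩ := hAne
  obtain ⟨b, hb⟩ := hBne
  have key := compact_sum_vol (hKc.insert a) (hLc.insert b)
    ⟨a, Set.mem_insert _ _⟩ ⟨b, Set.mem_insert _ _⟩
    (fun x hx y hy => hsub x (by rcases hx with rfl | hx; exact ha; exact hKA hx)
      y (by rcases hy with rfl | hy; exact hb; exact hLB hy))
  have h1 : volume K ≤ volume (insert a K) := measure_mono (Set.subset_insert _ _)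
  have h2 : volume L ≤ volume (insert b L) := measure_mono (Set.subset_insert _ _)
  calc volume A + volume B ≤ (volume K + ε / 2) + (volume L + ε / 2) :=
        add_le_add hKv.le hLv.le
    _ = (volume K + volume L) + (↑ε / 2 + ↑ε / 2) := by abel
    _ = (volume K + volume L) + ↑ε := by rw [ENNReal.add_halves]
    _ ≤ volume C + ↑ε := add_le_add_left (le_trans (add_le_add h1 h2) key) _

lemma sum_vol {A B C : Set ℝ} (hA : MeasurableSet A) (hB : MeasurableSet B)
    (hAne : A.Nonempty) (hBne : B.Nonempty)
    (hsub : ∀ x ∈ A, ∀ y ∈ B, x + y ∈ C) :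
    volume A + volume B ≤ volume C := by
  obtain ⟨a, ha⟩ := hAne
  obtain ⟨b, hb⟩ := hBne
  set An : ℕ → Set ℝ := fun n => insert a (A ∩ Icc (-(n : ℝ)) n) with hAn
  set Bn : ℕ → Set ℝ := fun n => insert b (B ∩ Icc (-(n : ℝ)) n) with hBn
  have hAnsub : ∀ n, An n ⊆ A := fun n x hx => by
    rcases hx with rfl | hx; exact ha; exact hx.1
  have hBnsub : ∀ n, Bn n ⊆ B := fun n x hx => by
    rcases hx with rfl | hx; exact hb; exact hx.1
  have hAnm : ∀ n, MeasurableSet (An n) := fun n =>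
    (hA.inter measurableSet_Icc).insert a
  have hBnm : ∀ n, MeasurableSet (Bn n) := fun n =>
    (hB.inter measurableSet_Icc).insert b
  have hfin : ∀ (S : Set ℝ) (c : ℝ) (n : ℕ), volume (insert c (S ∩ Icc (-(n:ℝ)) n)) ≠ ∞ := by
    intro S c n
    have : volume (insert c (S ∩ Icc (-(n:ℝ)) n)) ≤ volume {c} + volume (S ∩ Icc (-(n:ℝ)) n) := by
      rw [Set.insert_eq]; exact measure_union_le _ _
    refine ne_top_of_le_ne_top ?_ this
    simp only [measure_singleton, zero_add]
    exact ne_top_of_le_ne_top (by simp [Real.volume_Icc]) (measure_mono Set.inter_subset_right)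
  have hmono : ∀ (S : Set ℝ) (c : ℝ), Monotone (fun n : ℕ => insert c (S ∩ Icc (-(n:ℝ)) n)) := by
    intro S c m n hmn
    apply Set.insert_subset_insert
    apply Set.inter_subset_inter_right
    exact Icc_subset_Icc (by simp [hmn]) (by exact_mod_cast hmn)
  have hunion : ∀ (S : Set ℝ) (c : ℝ), c ∈ S → (⋃ n : ℕ, insert c (S ∩ Icc (-(n:ℝ)) n)) = S := by
    intro S c hc
    apply Set.Subset.antisymm
    · exact Set.iUnion_subset fun n x hx => by
        rcases hx with rfl | hx; exact hc; exact hx.1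
    · intro x hx
      obtain ⟨n, hn⟩ := exists_nat_ge |x|
      exact Set.mem_iUnion.2 ⟨n, Set.mem_insert_of_mem _ ⟨hx, by
        constructor <;> [linarith [neg_abs_le x]; linarith [le_abs_self x]]⟩⟩
  have hTA : Filter.Tendsto (fun n => volume (An n)) Filter.atTop (nhds (volume A)) := by
    have := tendsto_measure_iUnion_atTop (μ := volume) (hmono A a)
    rwa [hunion A a ha] at this
  have hTB : Filter.Tendsto (fun n => volume (Bn n)) Filter.atTop (nhds (volume B)) := by
    have := tendsto_measure_iUnion_atTop (μ := volume) (hmono B b)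
    rwa [hunion B b hb] at this
  refine le_of_tendsto (hTA.add hTB) (Filter.Eventually.of_forall fun n => ?_)
  exact sum_vol_finite (hAnm n) (hBnm n) ⟨a, Set.mem_insert _ _⟩ ⟨b, Set.mem_insert _ _⟩
    (hfin A a n) (hfin B b n)
    (fun x hx y hy => hsub x (hAnsub n hx) y (hBnsub n hy))

lemma scaled_sum_vol {t : ℝ} (h0 : 0 < t) (h1 : t < 1) {A B C : Set ℝ}
    (hA : MeasurableSet A) (hB : MeasurableSet B)
    (hAne : A.Nonempty) (hBne : B.Nonempty)
    (hsub : ∀ x ∈ A, ∀ y ∈ B, (1 - t) * x + t * y ∈ C) :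
    ENNReal.ofReal (1 - t) * volume A + ENNReal.ofReal t * volume B ≤ volume C := by
  have h1t : (0:ℝ) < 1 - t := by linarith
  set A' : Set ℝ := (fun x => (1 - t)⁻¹ * x) ⁻¹' A with hA'
  set B' : Set ℝ := (fun x => t⁻¹ * x) ⁻¹' B with hB'
  have hA'm : MeasurableSet A' := hA.preimage (measurable_const_mul _)
  have hB'm : MeasurableSet B' := hB.preimage (measurable_const_mul _)
  have hA'ne : A'.Nonempty := by
    obtain ⟨a, ha⟩ := hAne
    exact ⟨(1 - t) * a, by simp [hA', Set.mem_preimage, ← mul_assoc,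
      inv_mul_cancel₀ h1t.ne', ha]⟩
  have hB'ne : B'.Nonempty := by
    obtain ⟨b, hb⟩ := hBne
    exact ⟨t * b, by simp [hB', Set.mem_preimage, ← mul_assoc, inv_mul_cancel₀ h0.ne', hb]⟩
  have key := sum_vol hA'm hB'm hA'ne hB'ne (C := C) ?_
  · have e1 : volume A' = ENNReal.ofReal (1 - t) * volume A := by
      rw [hA', Real.volume_preimage_mul_left (inv_ne_zero h1t.ne'), inv_inv,
        abs_of_pos h1t]
    have e2 : volume B' = ENNReal.ofReal t * volume B := by
      rw [hB', Real.volume_preimage_mul_left (inv_ne_zero h0.ne'), inv_inv, abs_of_pos h0]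
    rwa [e1, e2] at key
  · intro x hx y hy
    have := hsub _ hx _ hy
    have ex : (1 - t) * ((1 - t)⁻¹ * x) = x := by field_simp
    have ey : t * (t⁻¹ * y) = y := by field_simp
    rwa [ex, ey] at this

lemma ennreal_geom_mean {w₁ w₂ : ℝ} (hw₁ : 0 < w₁) (hw₂ : 0 < w₂) (hw : w₁ + w₂ = 1)
    (p₁ p₂ : ℝ≥0∞) :
    p₁ ^ w₁ * p₂ ^ w₂ ≤ ENNReal.ofReal w₁ * p₁ + ENNReal.ofReal w₂ * p₂ := by
  have hw₁' : ENNReal.ofReal w₁ ≠ 0 := by simp [hw₁]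
  have hw₂' : ENNReal.ofReal w₂ ≠ 0 := by simp [hw₂]
  induction p₁ using ENNReal.recTopCoe with
  | top =>
    rcases eq_or_ne p₂ 0 with rfl | hp₂
    · simp [ENNReal.zero_rpow_of_pos hw₂]
    · have : ENNReal.ofReal w₁ * ⊤ + ENNReal.ofReal w₂ * p₂ = ⊤ := by
        rw [ENNReal.mul_top hw₁']; simp
      rw [this]; exact le_top
  | coe a =>
    induction p₂ using ENNReal.recTopCoe with
    | top =>
      rcases eq_or_ne (a : ℝ≥0∞) 0 with h | hp₁
      · rw [h, ENNReal.zero_rpow_of_pos hw₁, zero_mul]; exact zero_le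
      · have : ENNReal.ofReal w₁ * a + ENNReal.ofReal w₂ * ⊤ = ⊤ := by
          rw [ENNReal.mul_top hw₂']; simp
        rw [this]; exact le_top
    | coe b =>
      have e1 : ((a : ℝ≥0∞)) ^ w₁ = ((a ^ w₁ : ℝ≥0) : ℝ≥0∞) :=
        (ENNReal.coe_rpow_of_nonneg a hw₁.le).symm
      have e2 : ((b : ℝ≥0∞)) ^ w₂ = ((b ^ w₂ : ℝ≥0) : ℝ≥0∞) :=
        (ENNReal.coe_rpow_of_nonneg b hw₂.le).symm
      have e3 : ENNReal.ofReal w₁ = (w₁.toNNReal : ℝ≥0∞) := rfl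
      have e4 : ENNReal.ofReal w₂ = (w₂.toNNReal : ℝ≥0∞) := rfl
      rw [e1, e2, e3, e4, ← ENNReal.coe_mul, ← ENNReal.coe_mul, ← ENNReal.coe_mul,
        ← ENNReal.coe_add, ENNReal.coe_le_coe]
      have hsum : w₁.toNNReal + w₂.toNNReal = 1 := by
        rw [← Real.toNNReal_add hw₁.le hw₂.le, hw]; simp
      have := NNReal.geom_mean_le_arith_mean2_weighted w₁.toNNReal w₂.toNNReal a b hsum
      simpa [Real.coe_toNNReal _ hw₁.le, Real.coe_toNNReal _ hw₂.le] using this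

lemma min_le_geom {p q : ℝ} (hp : 0 < p) (hq : 0 < q) (hpq : p + q = 1) (a b : ℝ≥0∞) :
    min a b ≤ a ^ p * b ^ q := by
  rcases le_total a b with hab | hab
  · rw [min_eq_left hab]
    rcases eq_or_ne a 0 with rfl | ha0
    · exact zero_le
    rcases eq_or_ne a ⊤ with rfl | hat
    · have : b = ⊤ := top_le_iff.mp hab
      rw [this, ENNReal.top_rpow_of_pos hp, ENNReal.top_rpow_of_pos hq]
      simp
    calc a = a ^ (p + q) := by rw [hpq, ENNReal.rpow_one]
      _ = a ^ p * a ^ q := ENNReal.rpow_add p q ha0 hat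
      _ ≤ a ^ p * b ^ q := mul_le_mul_right (ENNReal.rpow_le_rpow hab hq.le) _
  · rw [min_eq_right hab]
    rcases eq_or_ne b 0 with rfl | hb0
    · exact zero_le
    rcases eq_or_ne b ⊤ with rfl | hbt
    · have : a = ⊤ := top_le_iff.mp hab
      rw [this, ENNReal.top_rpow_of_pos hp, ENNReal.top_rpow_of_pos hq]
      simp
    calc b = b ^ (p + q) := by rw [hpq, ENNReal.rpow_one]
      _ = b ^ p * b ^ q := ENNReal.rpow_add p q hb0 hbt
      _ ≤ a ^ p * b ^ q := mul_le_mul_left (ENNReal.rpow_le_rpow hab hp.le) _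

/-- Layer-cake representation for a function bounded by 1. -/
lemma layer_cake_le_one {f : ℝ → ℝ≥0∞} (hf : Measurable f) (hf1 : ∀ x, f x ≤ 1) :
    ∫⁻ x, f x = ∫⁻ s in Ioo (0:ℝ) 1, volume {a : ℝ | s < (f a).toReal} := by
  have hfin : ∀ x, f x ≠ ⊤ := fun x => ne_top_of_le_ne_top ENNReal.one_ne_top (hf1 x)
  have h1 : ∫⁻ x, f x = ∫⁻ x, ENNReal.ofReal ((f x).toReal) := by
    refine lintegral_congr fun x => ?_
    rw [ENNReal.ofReal_toReal (hfin x)]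
  rw [h1, lintegral_eq_lintegral_meas_lt volume
    (Filter.Eventually.of_forall fun x => ENNReal.toReal_nonneg)
    (hf.ennreal_toReal.aemeasurable)]
  rw [← Ioo_union_Ici_eq_Ioi (zero_lt_one (α := ℝ)),
    lintegral_union measurableSet_Ici (Set.disjoint_left.mpr fun x hx hx' => absurd hx.2 (not_lt.mpr hx'))]
  have : ∫⁻ s in Ici (1:ℝ), volume {a : ℝ | s < (f a).toReal} = 0 := by
    rw [setLIntegral_congr_fun measurableSet_Ici
      (fun s hs => ?_), lintegral_zero]
    have : {a : ℝ | s < (f a).toReal} = ∅ := by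
      ext a
      simp only [Set.mem_setOf_eq, Set.mem_empty_iff_false, iff_false, not_lt]
      calc (f a).toReal ≤ (1 : ℝ≥0∞).toReal :=
            ENNReal.toReal_mono ENNReal.one_ne_top (hf1 a)
        _ = 1 := by simp
        _ ≤ s := hs
    rw [this]; simp
  rw [this, add_zero]

lemma pl_dim1_norm {t : ℝ} (h0 : 0 < t) (h1 : t < 1) {f g h : ℝ → ℝ≥0∞}
    (hf : Measurable f) (hg : Measurable g) (hh : Measurable h)
    (hf1 : ∀ x, f x ≤ 1) (hg1 : ∀ x, g x ≤ 1)
    (hfs : ∀ s : ℝ, s < 1 → ∃ x, ENNReal.ofReal s < f x)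
    (hgs : ∀ s : ℝ, s < 1 → ∃ x, ENNReal.ofReal s < g x)
    (hyp : ∀ x y, min (f x) (g y) ≤ h ((1 - t) * x + t * y)) :
    ENNReal.ofReal (1 - t) * (∫⁻ x, f x) + ENNReal.ofReal t * (∫⁻ x, g x) ≤ ∫⁻ x, h x := by
  set h' : ℝ → ℝ≥0∞ := fun x => min (h x) 1 with hh'def
  have hh'm : Measurable h' := hh.min measurable_const
  have hh'1 : ∀ x, h' x ≤ 1 := fun x => min_le_right _ _
  have hstep : ∀ s ∈ Ioo (0:ℝ) 1,
      ENNReal.ofReal (1 - t) * volume {a : ℝ | s < (f a).toReal}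
        + ENNReal.ofReal t * volume {a : ℝ | s < (g a).toReal}
      ≤ volume {a : ℝ | s < (h' a).toReal} := by
    intro s hs
    have hof : ∀ (φ : ℝ → ℝ≥0∞) (x : ℝ), φ x ≤ 1 → (s < (φ x).toReal ↔ ENNReal.ofReal s < φ x) := by
      intro φ x hle
      have hne : φ x ≠ ⊤ := ne_top_of_le_ne_top ENNReal.one_ne_top hle
      rw [← ENNReal.ofReal_lt_iff_lt_toReal hs.1.le hne]
    refine scaled_sum_vol h0 h1 ?_ ?_ ?_ ?_ ?_
    · exact measurableSet_lt measurable_const hf.ennreal_toReal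
    · exact measurableSet_lt measurable_const hg.ennreal_toReal
    · obtain ⟨x, hx⟩ := hfs s hs.2
      exact ⟨x, (hof f x (hf1 x)).2 hx⟩
    · obtain ⟨x, hx⟩ := hgs s hs.2
      exact ⟨x, (hof g x (hg1 x)).2 hx⟩
    · intro x hx y hy
      have hfx : ENNReal.ofReal s < f x := (hof f x (hf1 x)).1 hx
      have hgy : ENNReal.ofReal s < g y := (hof g y (hg1 y)).1 hy
      have : ENNReal.ofReal s < h' ((1 - t) * x + t * y) := by
        apply lt_of_lt_of_le (lt_min hfx hgy)
        exact le_min (hyp x y) (le_trans (min_le_left _ _) (hf1 x))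
      exact (hof h' _ (hh'1 _)).2 this
  have hmf : Measurable fun s : ℝ => volume {a : ℝ | s < (f a).toReal} := by
    apply Antitone.measurable
    intro s s' hss'
    exact measure_mono fun a ha => lt_of_le_of_lt hss' ha
  have hmg : Measurable fun s : ℝ => volume {a : ℝ | s < (g a).toReal} := by
    apply Antitone.measurable
    intro s s' hss'
    exact measure_mono fun a ha => lt_of_le_of_lt hss' ha
  calc ENNReal.ofReal (1 - t) * (∫⁻ x, f x) + ENNReal.ofReal t * (∫⁻ x, g x)
      = ∫⁻ s in Ioo (0:ℝ) 1, (ENNReal.ofReal (1 - t) * volume {a : ℝ | s < (f a).toReal}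
          + ENNReal.ofReal t * volume {a : ℝ | s < (g a).toReal}) := by
        rw [layer_cake_le_one hf hf1, layer_cake_le_one hg hg1,
          lintegral_add_left ((hmf.const_mul _)) ,
          lintegral_const_mul _ hmf, lintegral_const_mul _ hmg]
    _ ≤ ∫⁻ s in Ioo (0:ℝ) 1, volume {a : ℝ | s < (h' a).toReal} :=
        setLIntegral_mono (Antitone.measurable (fun s s' hss' =>
          measure_mono fun a ha => lt_of_le_of_lt hss' ha)) hstep
    _ = ∫⁻ x, h' x := (layer_cake_le_one hh'm hh'1).symm
    _ ≤ ∫⁻ x, h x := lintegral_mono fun x => min_le_left _ _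

lemma pl_dim1 {t : ℝ} (h0 : 0 < t) (h1 : t < 1) {f g h : ℝ → ℝ≥0∞}
    (hf : Measurable f) (hg : Measurable g) (hh : Measurable h)
    (hyp : ∀ x y, f x ^ (1 - t) * g y ^ t ≤ h ((1 - t) * x + t * y)) :
    (∫⁻ x, f x) ^ (1 - t) * (∫⁻ x, g x) ^ t ≤ ∫⁻ x, h x := by
  have h1t : (0:ℝ) < 1 - t := by linarith
  rcases eq_or_ne (∫⁻ x, f x) 0 with hf0 | hf0
  · rw [hf0, ENNReal.zero_rpow_of_pos h1t, zero_mul]; exact zero_le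
  rcases eq_or_ne (∫⁻ x, g x) 0 with hg0 | hg0
  · rw [hg0, ENNReal.zero_rpow_of_pos h0, mul_zero]; exact zero_le
  -- truncations
  set F : ℕ → ℝ → ℝ≥0∞ := fun n x => min (f x) (n + 1) with hF
  set G : ℕ → ℝ → ℝ≥0∞ := fun n x => min (g x) (n + 1) with hG
  have hFm : ∀ n, Measurable (F n) := fun n => hf.min measurable_const
  have hGm : ∀ n, Measurable (G n) := fun n => hg.min measurable_const
  have key : ∀ n : ℕ, (∫⁻ x, F n x) ^ (1 - t) * (∫⁻ x, G n x) ^ t ≤ ∫⁻ x, h x := by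
    intro n
    set c : ℝ≥0∞ := ⨆ x, F n x with hc
    set d : ℝ≥0∞ := ⨆ x, G n x with hd
    have hcne : c ≠ 0 := by
      intro hc0
      apply hf0
      have : ∀ x, f x = 0 := by
        intro x
        have h1 : F n x ≤ c := le_iSup (F n) x
        rw [hc0] at h1
        have h2 : F n x = 0 := le_antisymm h1 zero_le
        rcases min_eq_iff.mp h2 with ⟨h3, _⟩ | ⟨h3, _⟩
        · exact h3
        · exact absurd h3 (by simp)
      simp [this]
    have hdne : d ≠ 0 := by
      intro hd0
      apply hg0
      have : ∀ x, g x = 0 := by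
        intro x
        have h1 : G n x ≤ d := le_iSup (G n) x
        rw [hd0] at h1
        have h2 : G n x = 0 := le_antisymm h1 zero_le
        rcases min_eq_iff.mp h2 with ⟨h3, _⟩ | ⟨h3, _⟩
        · exact h3
        · exact absurd h3 (by simp)
      simp [this]
    have hctop : c ≠ ⊤ := by
      refine ne_top_of_le_ne_top (?_ : ((n:ℝ≥0∞) + 1) ≠ ⊤) (iSup_le fun x => min_le_right _ _)
      simp
    have hdtop : d ≠ ⊤ := by
      refine ne_top_of_le_ne_top (?_ : ((n:ℝ≥0∞) + 1) ≠ ⊤) (iSup_le fun x => min_le_right _ _)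
      simp
    -- normalized functions
    set f' : ℝ → ℝ≥0∞ := fun x => c⁻¹ * F n x with hf'
    set g' : ℝ → ℝ≥0∞ := fun x => d⁻¹ * G n x with hg'
    set h'' : ℝ → ℝ≥0∞ := fun x => (c⁻¹ ^ (1 - t) * d⁻¹ ^ t) * h x with hh''
    have hcinv : c⁻¹ ≠ ⊤ := by simp [hcne]
    have hcinv0 : c⁻¹ ≠ 0 := by simp [hctop]
    have hdinv : d⁻¹ ≠ ⊤ := by simp [hdne]
    have hdinv0 : d⁻¹ ≠ 0 := by simp [hdtop]
    have hf'1 : ∀ x, f' x ≤ 1 := by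
      intro x
      rw [hf']
      calc c⁻¹ * F n x ≤ c⁻¹ * c := mul_le_mul_right (le_iSup (F n) x) _
        _ = 1 := ENNReal.inv_mul_cancel hcne hctop
    have hg'1 : ∀ x, g' x ≤ 1 := by
      intro x
      rw [hg']
      calc d⁻¹ * G n x ≤ d⁻¹ * d := mul_le_mul_right (le_iSup (G n) x) _
        _ = 1 := ENNReal.inv_mul_cancel hdne hdtop
    have hf's : ∀ s : ℝ, s < 1 → ∃ x, ENNReal.ofReal s < f' x := by
      intro s hs
      have : ENNReal.ofReal s < ⨆ x, f' x := by
        rw [hf']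
        have : (⨆ x, c⁻¹ * F n x) = c⁻¹ * c := by rw [← ENNReal.mul_iSup]
        rw [this, ENNReal.inv_mul_cancel hcne hctop]
        exact ENNReal.ofReal_lt_one.mpr hs
      exact lt_iSup_iff.mp this
    have hg's : ∀ s : ℝ, s < 1 → ∃ x, ENNReal.ofReal s < g' x := by
      intro s hs
      have : ENNReal.ofReal s < ⨆ x, g' x := by
        rw [hg']
        have : (⨆ x, d⁻¹ * G n x) = d⁻¹ * d := by rw [← ENNReal.mul_iSup]
        rw [this, ENNReal.inv_mul_cancel hdne hdtop]
        exact ENNReal.ofReal_lt_one.mpr hs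
      exact lt_iSup_iff.mp this
    have hyp' : ∀ x y, min (f' x) (g' y) ≤ h'' ((1 - t) * x + t * y) := by
      intro x y
      refine le_trans (min_le_geom h1t h0 (by ring) _ _) ?_
      rw [hf', hg', hh'']
      simp only
      rw [ENNReal.mul_rpow_of_nonneg _ _ h1t.le, ENNReal.mul_rpow_of_nonneg _ _ h0.le]
      calc c⁻¹ ^ (1 - t) * F n x ^ (1 - t) * (d⁻¹ ^ t * G n y ^ t)
          = (c⁻¹ ^ (1 - t) * d⁻¹ ^ t) * (F n x ^ (1 - t) * G n y ^ t) := by ring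
        _ ≤ (c⁻¹ ^ (1 - t) * d⁻¹ ^ t) * (f x ^ (1 - t) * g y ^ t) := by
            apply mul_le_mul_right
            exact mul_le_mul' (ENNReal.rpow_le_rpow (min_le_left _ _) h1t.le)
              (ENNReal.rpow_le_rpow (min_le_left _ _) h0.le)
        _ ≤ (c⁻¹ ^ (1 - t) * d⁻¹ ^ t) * h ((1 - t) * x + t * y) :=
            mul_le_mul_right (hyp x y) _
    have main := pl_dim1_norm h0 h1 ((hFm n).const_mul _) ((hGm n).const_mul _)
      (hh.const_mul _) hf'1 hg'1 hf's hg's hyp'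
    -- translate back
    have geo := ennreal_geom_mean h1t h0 (by ring) (∫⁻ x, f' x) (∫⁻ x, g' x)
    have step : (∫⁻ x, f' x) ^ (1 - t) * (∫⁻ x, g' x) ^ t ≤ ∫⁻ x, h'' x := le_trans geo main
    rw [hf', hg', hh''] at step
    rw [lintegral_const_mul _ (hFm n), lintegral_const_mul _ (hGm n),
      lintegral_const_mul _ hh] at step
    rw [ENNReal.mul_rpow_of_nonneg _ _ h1t.le, ENNReal.mul_rpow_of_nonneg _ _ h0.le] at step
    have step2 : (c⁻¹ ^ (1 - t) * d⁻¹ ^ t) * ((∫⁻ x, F n x) ^ (1 - t) * (∫⁻ x, G n x) ^ t)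
        ≤ (c⁻¹ ^ (1 - t) * d⁻¹ ^ t) * ∫⁻ x, h x := by
      calc (c⁻¹ ^ (1 - t) * d⁻¹ ^ t) * ((∫⁻ x, F n x) ^ (1 - t) * (∫⁻ x, G n x) ^ t)
          = c⁻¹ ^ (1 - t) * (∫⁻ x, F n x) ^ (1 - t) * (d⁻¹ ^ t * (∫⁻ x, G n x) ^ t) := by ring
        _ ≤ _ := step
    have hne : (c⁻¹ ^ (1 - t) * d⁻¹ ^ t) ≠ 0 := by
      apply mul_ne_zero
      · intro hcon
        rcases ENNReal.rpow_eq_zero_iff.mp hcon with ⟨hz, _⟩ | ⟨_, hneg⟩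
        · exact hcinv0 hz
        · linarith
      · intro hcon
        rcases ENNReal.rpow_eq_zero_iff.mp hcon with ⟨hz, _⟩ | ⟨_, hneg⟩
        · exact hdinv0 hz
        · linarith
    have hnt : (c⁻¹ ^ (1 - t) * d⁻¹ ^ t) ≠ ⊤ := by
      apply ENNReal.mul_ne_top
      · exact ENNReal.rpow_ne_top_of_nonneg h1t.le hcinv
      · exact ENNReal.rpow_ne_top_of_nonneg h0.le hdinv
    exact (ENNReal.mul_le_mul_iff_right hne hnt).mp step2
  -- take limits
  have hFmono : ∀ x, Monotone fun n : ℕ => F n x := fun x m n hmn =>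
    min_le_min le_rfl (add_le_add_left (by exact_mod_cast hmn) 1)
  have hGmono : ∀ x, Monotone fun n : ℕ => G n x := fun x m n hmn =>
    min_le_min le_rfl (add_le_add_left (by exact_mod_cast hmn) 1)
  have hsupnat : (⨆ n : ℕ, ((n : ℝ≥0∞) + 1)) = ⊤ := by
    apply le_antisymm le_top
    rw [← ENNReal.iSup_natCast]
    exact iSup_mono fun n => le_self_add
  have hFsup : ∀ x, (⨆ n : ℕ, F n x) = f x := by
    intro x
    rw [hF]
    simp only
    rw [← inf_iSup_eq, hsupnat, inf_top_eq]
  have hGsup : ∀ x, (⨆ n : ℕ, G n x) = g x := by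
    intro x
    rw [hG]
    simp only
    rw [← inf_iSup_eq, hsupnat, inf_top_eq]
  have eF : (⨆ n : ℕ, ∫⁻ x, F n x) = ∫⁻ x, f x := by
    rw [← lintegral_iSup hFm fun m n hmn x => hFmono x hmn]
    exact lintegral_congr hFsup
  have eG : (⨆ n : ℕ, ∫⁻ x, G n x) = ∫⁻ x, g x := by
    rw [← lintegral_iSup hGm fun m n hmn x => hGmono x hmn]
    exact lintegral_congr hGsup
  have tF : Filter.Tendsto (fun n : ℕ => ∫⁻ x, F n x) Filter.atTop (nhds (∫⁻ x, f x)) := by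
    rw [← eF]
    exact tendsto_atTop_iSup fun m n hmn => lintegral_mono fun x => hFmono x hmn
  have tG : Filter.Tendsto (fun n : ℕ => ∫⁻ x, G n x) Filter.atTop (nhds (∫⁻ x, g x)) := by
    rw [← eG]
    exact tendsto_atTop_iSup fun m n hmn => lintegral_mono fun x => hGmono x hmn
  have tF' : Filter.Tendsto (fun n : ℕ => (∫⁻ x, F n x) ^ (1 - t)) Filter.atTop
      (nhds ((∫⁻ x, f x) ^ (1 - t))) :=
    (ENNReal.continuous_rpow_const.tendsto _).comp tF
  have tG' : Filter.Tendsto (fun n : ℕ => (∫⁻ x, G n x) ^ t) Filter.atTop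
      (nhds ((∫⁻ x, g x) ^ t)) :=
    (ENNReal.continuous_rpow_const.tendsto _).comp tG
  have hane : (∫⁻ x, f x) ^ (1 - t) ≠ 0 := by
    intro hcon
    rcases ENNReal.rpow_eq_zero_iff.mp hcon with ⟨hz, _⟩ | ⟨_, hneg⟩
    · exact hf0 hz
    · linarith
  have hbne : (∫⁻ x, g x) ^ t ≠ 0 := by
    intro hcon
    rcases ENNReal.rpow_eq_zero_iff.mp hcon with ⟨hz, _⟩ | ⟨_, hneg⟩
    · exact hg0 hz
    · linarith
  have tprod := ENNReal.Tendsto.mul tF' (Or.inl hane) tG' (Or.inl hbne)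
  exact le_of_tendsto tprod (Filter.Eventually.of_forall key)

lemma cons_combo {n : ℕ} (t a b : ℝ) (z w : Fin n → ℝ) :
    (Fin.cons ((1 - t) * a + t * b) ((1 - t) • z + t • w) : Fin (n + 1) → ℝ)
      = (1 - t) • (Fin.cons a z : Fin (n + 1) → ℝ) + t • (Fin.cons b w : Fin (n + 1) → ℝ) := by
  funext i
  refine Fin.cases ?_ ?_ i
  · simp
  · intro j
    simp [smul_eq_mul]

theorem pl_pi : ∀ (n : ℕ) {t : ℝ}, 0 < t → t < 1 →
    ∀ {f g h : (Fin n → ℝ) → ℝ≥0∞}, Measurable f → Measurable g → Measurable h →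
    (∀ x y, f x ^ (1 - t) * g y ^ t ≤ h ((1 - t) • x + t • y)) →
    (∫⁻ x, f x) ^ (1 - t) * (∫⁻ x, g x) ^ t ≤ ∫⁻ x, h x := by
  intro n
  induction n with
  | zero =>
    intro t ht0 ht1 f g h hf hg hh hyp
    have huniv : volume (Set.univ : Set (Fin 0 → ℝ)) = 1 := by
      rw [volume_pi, Measure.pi_univ]
      simp
    have hint : ∀ φ : (Fin 0 → ℝ) → ℝ≥0∞, ∫⁻ x, φ x = φ default := by
      intro φ
      have h1 : ∫⁻ x, φ x = ∫⁻ _ : Fin 0 → ℝ, φ default :=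
        lintegral_congr fun x => by rw [Subsingleton.elim x default]
      rw [h1, lintegral_const, huniv, mul_one]
    rw [hint f, hint g, hint h]
    have := hyp default default
    rwa [Subsingleton.elim ((1 - t) • (default : Fin 0 → ℝ) + t • default) default] at this
  | succ n ih =>
    intro t ht0 ht1 f g h hf hg hh hyp
    have h1t : (0:ℝ) < 1 - t := by linarith
    set e : (Fin (n + 1) → ℝ) ≃ᵐ ℝ × (Fin n → ℝ) :=
      MeasurableEquiv.piFinSuccAbove (fun _ : Fin (n + 1) => ℝ) 0 with he
    have hpres : MeasurePreserving e.symm volume volume := by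
      have h1 := (measurePreserving_piFinSuccAbove (fun _ : Fin (n + 1) => (volume : Measure ℝ)) 0).symm
      have e1 : (volume : Measure (Fin (n+1) → ℝ)) = Measure.pi fun _ => volume := volume_pi
      have e2 : (volume : Measure (ℝ × (Fin n → ℝ))) =
          (volume : Measure ℝ).prod (Measure.pi fun _ => volume) := by
        rw [Measure.volume_eq_prod, volume_pi]
      rw [e1, e2]
      exact h1
    have hesymm : ∀ (a : ℝ) (z : Fin n → ℝ), e.symm (a, z) = Fin.cons a z := by
      intro a z
      show (MeasurableEquiv.piFinSuccAbove (fun _ : Fin (n + 1) => ℝ) 0).symm (a, z) = _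
      simp only [MeasurableEquiv.piFinSuccAbove, MeasurableEquiv.symm_mk,
        MeasurableEquiv.coe_mk, Equiv.symm_symm]
      simp only [Fin.insertNthEquiv_zero]
      rfl
    have hmc : Measurable (fun p : ℝ × (Fin n → ℝ) => (Fin.cons p.1 p.2 : Fin (n + 1) → ℝ)) := by
      have : (fun p : ℝ × (Fin n → ℝ) => (Fin.cons p.1 p.2 : Fin (n + 1) → ℝ))
          = fun p => e.symm p := by
        funext p; rw [hesymm p.1 p.2]
      rw [this]
      exact e.symm.measurable
    have key : ∀ (φ : (Fin (n + 1) → ℝ) → ℝ≥0∞), Measurable φ →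
        ∫⁻ x, φ x = ∫⁻ a : ℝ, ∫⁻ z : Fin n → ℝ, φ (Fin.cons a z) := by
      intro φ hφ
      rw [← hpres.lintegral_comp hφ]
      rw [Measure.volume_eq_prod ℝ (Fin n → ℝ)]
      rw [lintegral_prod (fun p => φ (e.symm p))
        ((Measurable.comp hφ e.symm.measurable : Measurable fun p => φ (e.symm p)).aemeasurable)]
      congr 1
      funext a
      congr 1
      funext z
      rw [hesymm]
    set F : ℝ → ℝ≥0∞ := fun a => ∫⁻ z, f (Fin.cons a z) with hF
    set G : ℝ → ℝ≥0∞ := fun a => ∫⁻ z, g (Fin.cons a z) with hG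
    set H : ℝ → ℝ≥0∞ := fun a => ∫⁻ z, h (Fin.cons a z) with hH
    have hsec : ∀ (φ : (Fin (n + 1) → ℝ) → ℝ≥0∞), Measurable φ → ∀ a : ℝ,
        Measurable fun z : Fin n → ℝ => φ (Fin.cons a z) := by
      intro φ hφ a
      exact (hφ.comp hmc).comp measurable_prodMk_left
    have hFm : Measurable F := (hf.comp hmc).lintegral_prod_right'
    have hGm : Measurable G := (hg.comp hmc).lintegral_prod_right'
    have hHm : Measurable H := (hh.comp hmc).lintegral_prod_right'
    have hyp1 : ∀ a b : ℝ, F a ^ (1 - t) * G b ^ t ≤ H ((1 - t) * a + t * b) := by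
      intro a b
      apply ih ht0 ht1 (hsec f hf a) (hsec g hg b) (hsec h hh _)
      intro z w
      rw [cons_combo]
      exact hyp _ _
    calc (∫⁻ x, f x) ^ (1 - t) * (∫⁻ x, g x) ^ t
        = (∫⁻ a, F a) ^ (1 - t) * (∫⁻ a, G a) ^ t := by rw [key f hf, key g hg]
      _ ≤ ∫⁻ a, H a := pl_dim1 ht0 ht1 hFm hGm hHm hyp1
      _ = ∫⁻ x, h x := (key h hh).symm

theorem pl_euc (d : ℕ) {t : ℝ} (ht0 : 0 < t) (ht1 : t < 1)
    {f g h : EuclideanSpace ℝ (Fin d) → ℝ≥0∞}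
    (hf : Measurable f) (hg : Measurable g) (hh : Measurable h)
    (hyp : ∀ x y, f x ^ (1 - t) * g y ^ t ≤ h ((1 - t) • x + t • y)) :
    (∫⁻ x, f x) ^ (1 - t) * (∫⁻ x, g x) ^ t ≤ ∫⁻ x, h x := by
  have hpres := (EuclideanSpace.volume_preserving_symm_measurableEquiv_toLp (Fin d)).symm
  set es := MeasurableEquiv.toLp 2 (Fin d → ℝ) with hes
  rw [← hpres.lintegral_comp hf, ← hpres.lintegral_comp hg, ← hpres.lintegral_comp hh]
  apply pl_pi d ht0 ht1 (hf.comp es.measurable) (hg.comp es.measurable) (hh.comp es.measurable)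
  intro x y
  simp only [Function.comp]
  have : es ((1 - t) • x + t • y) = (1 - t) • es x + t • es y := rfl
  rw [this]
  exact hyp _ _

lemma normsq_combo {E : Type*} [NormedAddCommGroup E] [NormedSpace ℝ E]
    (a b : ℝ) (ha : 0 ≤ a) (hb : 0 ≤ b) (hab : a + b = 1) (v w : E) :
    ‖a • v + b • w‖ ^ 2 ≤ a * ‖v‖ ^ 2 + b * ‖w‖ ^ 2 := by
  have h1 : ‖a • v + b • w‖ ≤ a * ‖v‖ + b * ‖w‖ := by
    refine le_trans (norm_add_le _ _) ?_
    rw [norm_smul, norm_smul, Real.norm_eq_abs, Real.norm_eq_abs, abs_of_nonneg ha,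
      abs_of_nonneg hb]
  have h2 : (0:ℝ) ≤ a * ‖v‖ + b * ‖w‖ := by positivity
  have h3 : ‖a • v + b • w‖ ^ 2 ≤ (a * ‖v‖ + b * ‖w‖) ^ 2 := by
    apply sq_le_sq' (by nlinarith [norm_nonneg (a • v + b • w)]) h1
  nlinarith [h3, sq_nonneg (‖v‖ - ‖w‖), mul_nonneg ha hb,
    mul_nonneg (mul_nonneg ha hb) (sq_nonneg (‖v‖ - ‖w‖))]

end PLAux

/-- if `g` is convex and the smoothed partition function
`Z(u) = ∫ exp(−‖q−u‖²/(4η) − g(q)) dq` is finite everywhere, then `Z` is log-concave,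
i.e. `G = −log Z` is convex on `ℝ^d`. -/
theorem G_convex (d : ℕ) (η : ℝ) (g : Euc d → ℝ)
    (hd : 1 ≤ d) (hη : 0 < η)
    (hgconv : ConvexOn ℝ Set.univ g)
    (hZ : ∀ u : Euc d, Integrable (fun q : Euc d => Real.exp (-‖q - u‖ ^ 2 / (4 * η) - g q))) :
    ConvexOn ℝ Set.univ (fun y : Euc d => -Real.log (Zfun d η g y)) := by
  have hgcont : Continuous g := by
    have := hgconv.continuousOn isOpen_univ
    rwa [continuousOn_univ] at this
  haveI : NeZero (volume : Measure (Euc d)) := by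
    refine ⟨fun h0 => ?_⟩
    have h2 : 0 < (volume : Measure (Euc d)) (Metric.ball 0 1) :=
      Metric.measure_ball_pos _ _ one_pos
    rw [h0] at h2
    simp at h2
  have hZpos : ∀ u : Euc d, 0 < Zfun d η g u := fun u => integral_exp_pos (hZ u)
  -- measurability of the ENNReal integrands
  have hFcont : ∀ u : Euc d, Measurable fun q : Euc d =>
      ENNReal.ofReal (Real.exp (-‖q - u‖ ^ 2 / (4 * η) - g q)) := by
    intro u
    apply Measurable.ennreal_ofReal
    apply Continuous.measurable
    exact Real.continuous_exp.comp
      (((continuous_norm.comp (continuous_id.sub continuous_const)).pow 2).neg.div_const _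
        |>.sub hgcont)
  have hlin : ∀ u : Euc d,
      (∫⁻ q : Euc d, ENNReal.ofReal (Real.exp (-‖q - u‖ ^ 2 / (4 * η) - g q)))
        = ENNReal.ofReal (Zfun d η g u) := by
    intro u
    rw [Zfun, ofReal_integral_eq_lintegral_ofReal (hZ u)
      (Filter.Eventually.of_forall fun q => (Real.exp_pos _).le)]
  refine ⟨convex_univ, ?_⟩
  intro x _ y _ a b ha hb hab
  rcases eq_or_lt_of_le ha with ha0 | ha
  · have hb1 : b = 1 := by linarith
    simp [← ha0, hb1]
  rcases eq_or_lt_of_le hb with hb0 | hb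
  · have ha1 : a = 1 := by linarith
    simp [← hb0, ha1]
  have ha' : a = 1 - b := by linarith
  have hb1 : b < 1 := by linarith
  set u : Euc d := a • x + b • y with hu
  -- pointwise hypothesis
  have hpt : ∀ q r : Euc d,
      ENNReal.ofReal (Real.exp (-‖q - x‖ ^ 2 / (4 * η) - g q)) ^ (1 - b) *
        ENNReal.ofReal (Real.exp (-‖r - y‖ ^ 2 / (4 * η) - g r)) ^ b
      ≤ ENNReal.ofReal (Real.exp (-‖((1 - b) • q + b • r) - u‖ ^ 2 / (4 * η)
          - g ((1 - b) • q + b • r))) := by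
    intro q r
    rw [ENNReal.ofReal_rpow_of_pos (Real.exp_pos _), ENNReal.ofReal_rpow_of_pos (Real.exp_pos _),
      ← ENNReal.ofReal_mul (by positivity)]
    apply ENNReal.ofReal_le_ofReal
    rw [← Real.exp_log (x := Real.exp _ ^ (1-b)) (by positivity),
      Real.log_rpow (Real.exp_pos _), Real.log_exp,
      ← Real.exp_log (x := Real.exp _ ^ b) (by positivity),
      Real.log_rpow (Real.exp_pos _), Real.log_exp, ← Real.exp_add]
    apply Real.exp_le_exp.mpr
    have hgc := hgconv.2 (Set.mem_univ q) (Set.mem_univ r) (by linarith : (0:ℝ) ≤ 1 - b) hb.le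
      (by ring)
    have hv : ((1 - b) • q + b • r) - u = (1 - b) • (q - x) + b • (r - y) := by
      rw [hu, ha']
      module
    have hn := normsq_combo (1 - b) b (by linarith) hb.le (by ring) (q - x) (r - y)
    rw [← hv] at hn
    have h4η : (0:ℝ) < 4 * η := by linarith
    have hdiv : ‖((1 - b) • q + b • r) - u‖ ^ 2 / (4 * η)
        ≤ ((1 - b) * ‖q - x‖ ^ 2 + b * ‖r - y‖ ^ 2) / (4 * η) :=
      div_le_div_of_nonneg_right hn h4η.le |>.trans_eq rfl
    have hsplit : ((1 - b) * ‖q - x‖ ^ 2 + b * ‖r - y‖ ^ 2) / (4 * η)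
        = (1 - b) * (‖q - x‖ ^ 2 / (4 * η)) + b * (‖r - y‖ ^ 2 / (4 * η)) := by ring
    rw [hsplit] at hdiv
    simp only [smul_eq_mul] at hgc
    rw [neg_div, neg_div, neg_div]
    linarith [hdiv, hgc]
  have key := pl_euc d hb hb1 (hFcont x) (hFcont y) (hFcont u) hpt
  rw [hlin x, hlin y, hlin u] at key
  rw [ENNReal.ofReal_rpow_of_pos (hZpos x), ENNReal.ofReal_rpow_of_pos (hZpos y),
    ← ENNReal.ofReal_mul (Real.rpow_pos_of_pos (hZpos x) _).le] at key
  have keyR : Zfun d η g x ^ (1 - b) * Zfun d η g y ^ b ≤ Zfun d η g u :=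
    (ENNReal.ofReal_le_ofReal_iff (hZpos u).le).mp key
  have hlog : (1 - b) * Real.log (Zfun d η g x) + b * Real.log (Zfun d η g y)
      ≤ Real.log (Zfun d η g u) := by
    have hlhs : (0:ℝ) < Zfun d η g x ^ (1 - b) * Zfun d η g y ^ b :=
      mul_pos (Real.rpow_pos_of_pos (hZpos x) _) (Real.rpow_pos_of_pos (hZpos y) _)
    have := Real.log_le_log hlhs keyR
    rwa [Real.log_mul (Real.rpow_pos_of_pos (hZpos x) _).ne' (Real.rpow_pos_of_pos (hZpos y) _).ne',
      Real.log_rpow (hZpos x), Real.log_rpow (hZpos y)] at this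
  simp only [smul_eq_mul]
  rw [ha']
  have : -Real.log (Zfun d η g u) ≤ (1 - b) * -Real.log (Zfun d η g x)
      + b * -Real.log (Zfun d η g y) := by
    have hx := hlog
    ring_nf
    ring_nf at hx
    linarith
  convert this using 2 <;> rw [hu, ha']
end
end
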